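/- Let π be a probability measure on ℝ^d with density π(θ) such that −log π is three times continuously differentiable and α-strongly convex, and suppose sup_θ Σ_{i=1}^d ‖(D² ∂ᵢ log π)(θ)‖₂² ≤ M². Let θ* be the maximizer of log π, H* = −(D² log π)(θ*), and let π̂ = N(θ*, (H*)^{−1}) be the Laplace approximation with (H*)^{−1} having eigenvalues λ. Then the (1, π̂)-Fisher distance between π̂ and π is at most M·‖λ‖₁, i.e., ∫ ‖∇log π(θ) + H*(θ − θ*)‖₂ π̂(dθ) ≤ M·‖λ‖₁. -/

import Mathlib

open MeasureTheory ProbabilityTheory Real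
open scoped NNReal ENNReal

lemma aux_map_eval {ι : Type*} [Fintype ι] [DecidableEq ι] {α : ι → Type*} [∀ i, MeasurableSpace (α i)]
    (μ : ∀ i, Measure (α i)) [∀ i, IsProbabilityMeasure (μ i)] (i : ι) :
    (Measure.pi μ).map (Function.eval i) = μ i := by
  ext s hs
  rw [Measure.map_apply (measurable_pi_apply i) hs]
  have h : Function.eval i ⁻¹' s = Set.pi Set.univ (Function.update (fun j => Set.univ) i s) := by
    ext x
    simp only [Set.mem_preimage, Set.mem_pi, Set.mem_univ, forall_true_left, Function.eval]
    constructor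
    · intro hx j
      rcases eq_or_ne j i with rfl | hj
      · simpa using hx
      · simp [Function.update_of_ne hj]
    · intro hx
      have := hx i
      simpa using this
  rw [h, Measure.pi_pi]
  rw [Finset.prod_eq_single i]
  · simp
  · intro j _ hj; simp [Function.update_of_ne hj]
  · simp

lemma aux_integrable_sq_exp {b : ℝ} (hb : 0 < b) :
    Integrable (fun x : ℝ => x ^ 2 * Real.exp (-b * x ^ 2)) := by
  have h := integrable_rpow_mul_exp_neg_mul_sq hb (s := 2) (by norm_num)
  refine h.congr ?_
  filter_upwards with x
  rw [show (2:ℝ) = ((2:ℕ):ℝ) by norm_num, Real.rpow_natCast]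

lemma aux_integral_sq_exp {b : ℝ} (hb : 0 < b) :
    ∫ x : ℝ, x ^ 2 * Real.exp (-b * x ^ 2) = (2 * b)⁻¹ * Real.sqrt (π / b) := by
  have hu : ∀ x : ℝ, HasDerivAt (fun x : ℝ => x) 1 x := fun x => hasDerivAt_id x
  have hv : ∀ x : ℝ, HasDerivAt (fun x : ℝ => -(2 * b)⁻¹ * Real.exp (-b * x ^ 2))
      (x * Real.exp (-b * x ^ 2)) x := by
    intro x
    have h1 : HasDerivAt (fun x : ℝ => -b * x ^ 2) (-b * (2 * x)) x := by
      simpa using ((hasDerivAt_pow 2 x).const_mul (-b))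
    have h2 := (h1.exp).const_mul (-(2 * b)⁻¹)
    refine h2.congr_deriv ?_
    rw [show -(2 * b)⁻¹ * (Real.exp (-b * x ^ 2) * (-b * (2 * x))) = (b * b⁻¹) * (x * Real.exp (-b * x ^ 2)) by ring, mul_inv_cancel₀ hb.ne', one_mul]
  have huv' : Integrable (fun x : ℝ => x * (x * Real.exp (-b * x ^ 2))) := by
    refine (aux_integrable_sq_exp hb).congr ?_
    filter_upwards with x; ring
  have hu'v : Integrable (fun x : ℝ => 1 * (-(2 * b)⁻¹ * Real.exp (-b * x ^ 2))) := by
    refine ((integrable_exp_neg_mul_sq hb).const_mul (-(2 * b)⁻¹)).congr ?_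
    filter_upwards with x; ring
  have huv : Integrable (fun x : ℝ => x * (-(2 * b)⁻¹ * Real.exp (-b * x ^ 2))) := by
    refine ((integrable_mul_exp_neg_mul_sq hb).const_mul (-(2 * b)⁻¹)).congr ?_
    filter_upwards with x; ring
  have key := integral_mul_deriv_eq_deriv_mul_of_integrable (fun x _ => hu x) (fun x _ => hv x) huv' hu'v huv
  have e1 : ∫ x : ℝ, x * (x * Real.exp (-b * x ^ 2)) = ∫ x : ℝ, x ^ 2 * Real.exp (-b * x ^ 2) := by
    congr 1; funext x; ring
  have e2 : ∫ x : ℝ, (1 : ℝ) * (-(2 * b)⁻¹ * Real.exp (-b * x ^ 2))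
      = -(2 * b)⁻¹ * ∫ x : ℝ, Real.exp (-b * x ^ 2) := by
    rw [← integral_const_mul]
    congr 1; funext x; ring
  rw [e1] at key
  rw [key]
  rw [e2, integral_gaussian]
  ring

lemma aux_pdf_eq (v : ℝ≥0) (x : ℝ) :
    gaussianPDFReal 0 v x = (Real.sqrt (2 * π * v))⁻¹ * Real.exp (-(2 * (v:ℝ))⁻¹ * x ^ 2) := by
  simp only [gaussianPDFReal]
  congr 1
  rcases eq_or_ne (v : ℝ) 0 with h | h
  · simp [h]
  · congr 1
    field_simp
    ring

lemma aux_gaussian_meas (v : ℝ≥0) :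
    Measurable (fun x => (gaussianPDFReal 0 v x).toNNReal) :=
  (measurable_gaussianPDFReal 0 v).real_toNNReal

lemma aux_gaussian_withDensity (v : ℝ≥0) (hv : v ≠ 0) :
    gaussianReal 0 v = volume.withDensity (fun x => ((gaussianPDFReal 0 v x).toNNReal : ℝ≥0∞)) := by
  rw [gaussianReal_of_var_ne_zero 0 hv]
  congr 1

lemma aux_gaussian_sq_integrable (v : ℝ≥0) (hv : v ≠ 0) :
    Integrable (fun x : ℝ => x ^ 2) (gaussianReal 0 v) := by
  have hpos : (0:ℝ) < v := lt_of_le_of_ne (v.coe_nonneg) (by exact_mod_cast (Ne.symm hv))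
  rw [aux_gaussian_withDensity v hv,
    integrable_withDensity_iff_integrable_smul (aux_gaussian_meas v)]
  have hb : (0:ℝ) < (2 * (v:ℝ))⁻¹ := by positivity
  refine (((aux_integrable_sq_exp hb).const_mul (Real.sqrt (2 * π * v))⁻¹).congr ?_)
  filter_upwards with x
  rw [NNReal.smul_def, Real.coe_toNNReal _ (gaussianPDFReal_nonneg 0 v x), smul_eq_mul,
    aux_pdf_eq v x]
  ring

lemma aux_gaussian_sq (v : ℝ≥0) (hv : v ≠ 0) :
    ∫ x : ℝ, x ^ 2 ∂(gaussianReal 0 v) = v := by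
  have hpos : (0:ℝ) < v := lt_of_le_of_ne (v.coe_nonneg) (by exact_mod_cast (Ne.symm hv))
  rw [aux_gaussian_withDensity v hv,
    integral_withDensity_eq_integral_smul (aux_gaussian_meas v)]
  have hb : (0:ℝ) < (2 * (v:ℝ))⁻¹ := by positivity
  have hc : ∀ x : ℝ, (gaussianPDFReal 0 v x).toNNReal • x ^ 2
      = (Real.sqrt (2 * π * v))⁻¹ * (x ^ 2 * Real.exp (-(2 * (v:ℝ))⁻¹ * x ^ 2)) := by
    intro x
    rw [NNReal.smul_def, Real.coe_toNNReal _ (gaussianPDFReal_nonneg 0 v x), smul_eq_mul,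
      aux_pdf_eq v x]
    ring
  calc ∫ x : ℝ, (gaussianPDFReal 0 v x).toNNReal • x ^ 2
      = ∫ x : ℝ, (Real.sqrt (2 * π * v))⁻¹ * (x ^ 2 * Real.exp (-(2 * (v:ℝ))⁻¹ * x ^ 2)) := by
        congr 1; funext x; exact hc x
    _ = (Real.sqrt (2 * π * v))⁻¹ * ((2 * (2 * (v:ℝ))⁻¹)⁻¹ * Real.sqrt (π / (2 * (v:ℝ))⁻¹)) := by
        rw [integral_const_mul, aux_integral_sq_exp hb]
    _ = v := by
        have h1 : π / (2 * (v:ℝ))⁻¹ = 2 * π * v := by field_simp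
        have h2 : (2 * (2 * (v:ℝ))⁻¹)⁻¹ = v := by field_simp
        rw [h1, h2]
        have h3 : Real.sqrt (2 * π * v) ≠ 0 := by
          refine ne_of_gt (Real.sqrt_pos.mpr ?_)
          positivity
        field_simp

section Pi
variable (d : ℕ) (lam : Fin d → ℝ≥0)

lemma aux_norm_sq (x : EuclideanSpace ℝ (Fin d)) : ‖x‖ ^ 2 = ∑ i, (x i) ^ 2 := by
  rw [EuclideanSpace.norm_eq, Real.sq_sqrt]
  · congr 1; funext i; rw [Real.norm_eq_abs, sq_abs]
  · positivity

lemma aux_coord_integrable (hlam : ∀ i, lam i ≠ 0) (i : Fin d) :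
    Integrable (fun x : EuclideanSpace ℝ (Fin d) => (x i) ^ 2)
      ((Measure.pi fun i => gaussianReal 0 (lam i)).map (WithLp.toLp 2) : Measure (EuclideanSpace ℝ (Fin d))) := by
  rw [integrable_map_measure (by fun_prop : Continuous fun x : EuclideanSpace ℝ (Fin d) => (x i) ^ 2).aestronglyMeasurable
    (WithLp.measurable_toLp 2 (Fin d → ℝ)).aemeasurable]
  change Integrable (fun x : Fin d → ℝ => (x i) ^ 2) (Measure.pi fun i => gaussianReal 0 (lam i))
  have h1 : AEMeasurable (Function.eval i)
      ((Measure.pi fun i => gaussianReal 0 (lam i)) : Measure (Fin d → ℝ)) :=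
    (measurable_pi_apply i).aemeasurable
  have h2 : AEStronglyMeasurable (fun t : ℝ => t ^ 2)
      (((Measure.pi fun i => gaussianReal 0 (lam i)) :
        Measure (Fin d → ℝ)).map (Function.eval i)) :=
    (continuous_pow 2).aestronglyMeasurable
  have h3 := (integrable_map_measure h2 h1).mp
  rw [aux_map_eval (fun i => gaussianReal 0 (lam i)) i] at h3
  exact h3 (aux_gaussian_sq_integrable (lam i) (hlam i))

lemma aux_pi_integrable (hlam : ∀ i, lam i ≠ 0) :
    Integrable (fun x : EuclideanSpace ℝ (Fin d) => ‖x‖ ^ 2)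
      ((Measure.pi fun i => gaussianReal 0 (lam i)).map (WithLp.toLp 2) : Measure (EuclideanSpace ℝ (Fin d))) := by
  have := integrable_finset_sum (μ := ((Measure.pi fun i => gaussianReal 0 (lam i)).map (WithLp.toLp 2) :
      Measure (EuclideanSpace ℝ (Fin d)))) (f := fun i (x : EuclideanSpace ℝ (Fin d)) => (x i) ^ 2)
      Finset.univ (fun i _ => aux_coord_integrable d lam hlam i)
  refine this.congr ?_
  filter_upwards with x
  rw [aux_norm_sq]

lemma aux_pi_moment (hlam : ∀ i, lam i ≠ 0) :
    ∫ x : EuclideanSpace ℝ (Fin d), ‖x‖ ^ 2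
      ∂((Measure.pi fun i => gaussianReal 0 (lam i)).map (WithLp.toLp 2) : Measure (EuclideanSpace ℝ (Fin d)))
      = ∑ i, (lam i : ℝ) := by
  have h : ∀ x : EuclideanSpace ℝ (Fin d), ‖x‖ ^ 2 = ∑ i, (x i) ^ 2 := aux_norm_sq d
  rw [integral_congr_ae (Filter.Eventually.of_forall h)]
  rw [integral_finset_sum Finset.univ (fun i _ => aux_coord_integrable d lam hlam i)]
  congr 1
  funext i
  show ∫ x : EuclideanSpace ℝ (Fin d), (x i) ^ 2 ∂((Measure.pi fun i => gaussianReal 0 (lam i)).map (WithLp.toLp 2) : Measure (EuclideanSpace ℝ (Fin d))) = (lam i : ℝ)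
  rw [integral_map (WithLp.measurable_toLp 2 (Fin d → ℝ)).aemeasurable
    (by fun_prop : Continuous fun x : EuclideanSpace ℝ (Fin d) => (x i) ^ 2).aestronglyMeasurable]
  change ∫ x : Fin d → ℝ, (x i) ^ 2 ∂(Measure.pi fun i => gaussianReal 0 (lam i)) = _
  have h1 : AEMeasurable (Function.eval i)
      ((Measure.pi fun i => gaussianReal 0 (lam i)) : Measure (Fin d → ℝ)) :=
    (measurable_pi_apply i).aemeasurable
  have h2 : AEStronglyMeasurable (fun t : ℝ => t ^ 2)
      (((Measure.pi fun i => gaussianReal 0 (lam i)) :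
        Measure (Fin d → ℝ)).map (Function.eval i)) :=
    (continuous_pow 2).aestronglyMeasurable
  have h4 := integral_map h1 h2
  rw [aux_map_eval (fun i => gaussianReal 0 (lam i)) i] at h4
  rw [← aux_gaussian_sq (lam i) (hlam i)]
  exact h4.symm

end Pi


lemma aux_pointwise {d : ℕ} {f : EuclideanSpace ℝ (Fin d) → ℝ} (hsm : ContDiff ℝ 3 f)
    {M : ℝ} (hM : 0 ≤ M)
    (hbd : ∀ θ, ∑ i, ‖iteratedFDeriv ℝ 2 (fun t => gradient f t i) θ‖ ^ 2 ≤ M ^ 2)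
    {θs : EuclideanSpace ℝ (Fin d)} (hmax : ∀ θ, f θ ≤ f θs)
    {lam : Fin d → ℝ≥0}
    (hH : ∀ v w : EuclideanSpace ℝ (Fin d),
      iteratedFDeriv ℝ 2 f θs ![v, w] = -∑ i, ((lam i : ℝ))⁻¹ * v i * w i)
    (θ : EuclideanSpace ℝ (Fin d)) :
    ‖gradient f θ +
        (show EuclideanSpace ℝ (Fin d) from WithLp.toLp 2 fun i => ((lam i : ℝ))⁻¹ * (θ i - θs i))‖
      ≤ M * ‖θ - θs‖ ^ 2 := by
  classical
  -- the reassembly map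
  set T : (EuclideanSpace ℝ (Fin d) →L[ℝ] ℝ) →L[ℝ] EuclideanSpace ℝ (Fin d) :=
    (((EuclideanSpace.equiv (Fin d) ℝ).symm : (Fin d → ℝ) →L[ℝ] EuclideanSpace ℝ (Fin d))).comp
      (ContinuousLinearMap.pi fun i => ContinuousLinearMap.apply ℝ ℝ (EuclideanSpace.single i 1))
    with hTdef
  have hT : ∀ (l : EuclideanSpace ℝ (Fin d) →L[ℝ] ℝ) (i : Fin d),
      T l i = l (EuclideanSpace.single i 1) := by
    intro l i; rfl
  -- gradient as composition
  have hgrad : ∀ x, gradient f x = T (fderiv ℝ f x) := by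
    intro x
    ext i
    rw [hT]
    have h2 : (inner ℝ ((InnerProductSpace.toDual ℝ (EuclideanSpace ℝ (Fin d))).symm
        (fderiv ℝ f x)) (EuclideanSpace.single i 1) : ℝ)
        = fderiv ℝ f x (EuclideanSpace.single i 1) :=
      InnerProductSpace.toDual_symm_apply
    have h1 : (InnerProductSpace.toDual ℝ (EuclideanSpace ℝ (Fin d))).symm (fderiv ℝ f x)
        = gradient f x := rfl
    rw [h1] at h2
    rw [← h2, real_inner_comm]
    have h3 := EuclideanSpace.inner_single_left (𝕜 := ℝ) i 1 (gradient f x)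
    simpa using h3.symm
  have hgradfun : (gradient f) = fun x => T (fderiv ℝ f x) := funext hgrad
  have hG2 : ContDiff ℝ 2 (gradient f) := by
    rw [hgradfun]
    exact T.contDiff.comp (hsm.fderiv_right (by norm_num))
  have hGdiff : Differentiable ℝ (gradient f) := hG2.differentiable (by norm_num)
  have hΦ1 : ContDiff ℝ 1 (fderiv ℝ (gradient f)) := hG2.fderiv_right (by norm_num)
  have hΦdiff : Differentiable ℝ (fderiv ℝ (gradient f)) := hΦ1.differentiable one_ne_zero
  -- first-level componentwise identity
  have hcomp1 : ∀ (i : Fin d) (x : EuclideanSpace ℝ (Fin d)),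
      fderiv ℝ (fun t => gradient f t i) x
        = (EuclideanSpace.proj (𝕜 := ℝ) i).comp (fderiv ℝ (gradient f) x) := by
    intro i x
    exact ((EuclideanSpace.proj (𝕜 := ℝ) i).hasFDerivAt.comp x (hGdiff x).hasFDerivAt).fderiv
  -- second-level componentwise identity
  have hcomp2 : ∀ (i : Fin d) (x : EuclideanSpace ℝ (Fin d))
      (a b : EuclideanSpace ℝ (Fin d)),
      iteratedFDeriv ℝ 2 (fun t => gradient f t i) x ![a, b]
        = (fderiv ℝ (fderiv ℝ (gradient f)) x a b) i := by
    intro i x a b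
    rw [iteratedFDeriv_two_apply]
    have h1 : (fderiv ℝ (fun t => gradient f t i)) =
        fun y => (ContinuousLinearMap.compL ℝ (EuclideanSpace ℝ (Fin d))
          (EuclideanSpace ℝ (Fin d)) ℝ (EuclideanSpace.proj (𝕜 := ℝ) i))
          (fderiv ℝ (gradient f) y) :=
      funext fun y => hcomp1 i y
    rw [h1]
    have h2 : fderiv ℝ (fun y => (ContinuousLinearMap.compL ℝ (EuclideanSpace ℝ (Fin d))
        (EuclideanSpace ℝ (Fin d)) ℝ (EuclideanSpace.proj (𝕜 := ℝ) i))
          (fderiv ℝ (gradient f) y)) x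
        = (ContinuousLinearMap.compL ℝ (EuclideanSpace ℝ (Fin d))
        (EuclideanSpace ℝ (Fin d)) ℝ (EuclideanSpace.proj (𝕜 := ℝ) i)).comp
          (fderiv ℝ (fderiv ℝ (gradient f)) x) :=
      ((ContinuousLinearMap.compL ℝ (EuclideanSpace ℝ (Fin d))
        (EuclideanSpace ℝ (Fin d)) ℝ
        (EuclideanSpace.proj (𝕜 := ℝ) i)).hasFDerivAt.comp x (hΦdiff x).hasFDerivAt).fderiv
    rw [h2]
    simp only [Matrix.cons_val_zero, Matrix.cons_val_one, Matrix.head_cons]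
    rfl
  -- bound on third derivative
  have hc1 : ∀ y, ‖fderiv ℝ (fderiv ℝ (gradient f)) y‖ ≤ M := by
    intro y
    refine ContinuousLinearMap.opNorm_le_bound _ hM fun a => ?_
    refine ContinuousLinearMap.opNorm_le_bound _ (by positivity) fun b => ?_
    have hnn : (0:ℝ) ≤ M * ‖a‖ * ‖b‖ := by positivity
    have hsq : ‖fderiv ℝ (fderiv ℝ (gradient f)) y a b‖ ^ 2 ≤ (M * ‖a‖ * ‖b‖) ^ 2 := by
      rw [aux_norm_sq _]
      have step1 : ∀ i : Fin d, ((fderiv ℝ (fderiv ℝ (gradient f)) y a b) i) ^ 2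
          ≤ ‖iteratedFDeriv ℝ 2 (fun t => gradient f t i) y‖ ^ 2 * (‖a‖ * ‖b‖) ^ 2 := by
        intro i
        rw [← hcomp2 i y a b]
        have hle := (iteratedFDeriv ℝ 2 (fun t => gradient f t i) y).le_opNorm ![a, b]
        have hprod : ∏ j, ‖(![a, b]) j‖ = ‖a‖ * ‖b‖ := by
          simp [Fin.prod_univ_two]
        rw [hprod] at hle
        have habs : |iteratedFDeriv ℝ 2 (fun t => gradient f t i) y ![a, b]|
            ≤ ‖iteratedFDeriv ℝ 2 (fun t => gradient f t i) y‖ * (‖a‖ * ‖b‖) := by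
          rw [← Real.norm_eq_abs]; exact hle
        calc (iteratedFDeriv ℝ 2 (fun t => gradient f t i) y ![a, b]) ^ 2
            = |iteratedFDeriv ℝ 2 (fun t => gradient f t i) y ![a, b]| ^ 2 := (sq_abs _).symm
          _ ≤ (‖iteratedFDeriv ℝ 2 (fun t => gradient f t i) y‖ * (‖a‖ * ‖b‖)) ^ 2 := by
              exact pow_le_pow_left₀ (abs_nonneg _) habs 2
          _ = ‖iteratedFDeriv ℝ 2 (fun t => gradient f t i) y‖ ^ 2 * (‖a‖ * ‖b‖) ^ 2 := by ring
      calc ∑ i, ((fderiv ℝ (fderiv ℝ (gradient f)) y a b) i) ^ 2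
          ≤ ∑ i, ‖iteratedFDeriv ℝ 2 (fun t => gradient f t i) y‖ ^ 2 * (‖a‖ * ‖b‖) ^ 2 :=
            Finset.sum_le_sum fun i _ => step1 i
        _ = (∑ i, ‖iteratedFDeriv ℝ 2 (fun t => gradient f t i) y‖ ^ 2) * (‖a‖ * ‖b‖) ^ 2 := by
            rw [Finset.sum_mul]
        _ ≤ M ^ 2 * (‖a‖ * ‖b‖) ^ 2 := by
            refine mul_le_mul_of_nonneg_right (hbd y) (by positivity)
        _ = (M * ‖a‖ * ‖b‖) ^ 2 := by ring
    calc ‖fderiv ℝ (fderiv ℝ (gradient f)) y a b‖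
        = Real.sqrt (‖fderiv ℝ (fderiv ℝ (gradient f)) y a b‖ ^ 2) := by
          rw [Real.sqrt_sq (norm_nonneg _)]
      _ ≤ Real.sqrt ((M * ‖a‖ * ‖b‖) ^ 2) := Real.sqrt_le_sqrt hsq
      _ = M * ‖a‖ * ‖b‖ := Real.sqrt_sq hnn
  -- Lipschitz bound for the Hessian of f (as derivative of gradient)
  have hlip : ∀ x, ‖fderiv ℝ (gradient f) x - fderiv ℝ (gradient f) θs‖ ≤ M * ‖x - θs‖ :=
    fun x => convex_univ.norm_image_sub_le_of_norm_fderiv_le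
      (fun y _ => hΦdiff y) (fun y _ => hc1 y)
      (Set.mem_univ θs) (Set.mem_univ x)
  -- derivative of gradient at θs
  have hB : ∀ (v : EuclideanSpace ℝ (Fin d)) (i : Fin d),
      (fderiv ℝ (gradient f) θs v) i = -((lam i : ℝ))⁻¹ * v i := by
    intro v i
    have h0 : (fderiv ℝ (gradient f) θs v) i
        = fderiv ℝ (fun t => gradient f t i) θs v := by
      rw [hcomp1 i θs]; rfl
    rw [h0]
    -- identify the coordinate function with an evaluation of fderiv f
    have hco : (fun t => gradient f t i) = fun t => (fderiv ℝ f t) (EuclideanSpace.single i 1) := by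
      funext t
      rw [hgrad t, hT]
    rw [hco]
    have hdf : DifferentiableAt ℝ (fderiv ℝ f) θs :=
      ((hsm.fderiv_right (m := 2) (by norm_num)).differentiable (by norm_num)) θs
    have h1 : fderiv ℝ (fun t => (fderiv ℝ f t) (EuclideanSpace.single i 1)) θs
        = (ContinuousLinearMap.apply ℝ ℝ (EuclideanSpace.single i 1)).comp
            (fderiv ℝ (fderiv ℝ f) θs) :=
      by exact ((ContinuousLinearMap.apply ℝ ℝ
        (EuclideanSpace.single i 1)).hasFDerivAt.comp θs hdf.hasFDerivAt).fderiv
    rw [h1]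
    have h2 : iteratedFDeriv ℝ 2 f θs ![v, EuclideanSpace.single i 1]
        = fderiv ℝ (fderiv ℝ f) θs v (EuclideanSpace.single i 1) := by
      rw [iteratedFDeriv_two_apply]
      simp
    have h3 := hH v (EuclideanSpace.single i 1)
    rw [h2] at h3
    have h4 : ∑ j, ((lam j : ℝ))⁻¹ * v j * (EuclideanSpace.single i 1 j) = ((lam i : ℝ))⁻¹ * v i := by
      rw [Finset.sum_eq_single i]
      · simp
      · intro j _ hj
        simp [EuclideanSpace.single_apply, hj]
      · simp
    simp only [ContinuousLinearMap.coe_comp', Function.comp_apply,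
      ContinuousLinearMap.apply_apply]
    rw [h3, h4]
    ring
  -- gradient vanishes at θs
  have hG0 : gradient f θs = 0 := by
    have hmax' : IsLocalMax f θs := Filter.Eventually.of_forall hmax
    have h0 : fderiv ℝ f θs = 0 := hmax'.fderiv_eq_zero
    rw [hgrad θs, h0, map_zero]
  -- main inequality via mean value with fixed linear map
  have hmem1 : θs ∈ Metric.closedBall θs ‖θ - θs‖ :=
    Metric.mem_closedBall_self (norm_nonneg _)
  have hmem2 : θ ∈ Metric.closedBall θs ‖θ - θs‖ := by
    rw [Metric.mem_closedBall, dist_eq_norm]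
  have hbound : ∀ x ∈ Metric.closedBall θs ‖θ - θs‖,
      ‖fderiv ℝ (gradient f) x - fderiv ℝ (gradient f) θs‖ ≤ M * ‖θ - θs‖ := by
    intro x hx
    refine (hlip x).trans ?_
    refine mul_le_mul_of_nonneg_left ?_ hM
    rw [Metric.mem_closedBall, dist_eq_norm] at hx
    exact hx
  have hkey := (convex_closedBall θs ‖θ - θs‖).norm_image_sub_le_of_norm_fderiv_le'
    (fun x _ => hGdiff x) hbound hmem1 hmem2
  -- rewrite the left-hand side
  have heq : gradient f θ - gradient f θs - (fderiv ℝ (gradient f) θs) (θ - θs)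
      = gradient f θ +
        (show EuclideanSpace ℝ (Fin d) from WithLp.toLp 2 fun i => ((lam i : ℝ))⁻¹ * (θ i - θs i)) := by
    rw [hG0, sub_zero]
    ext i
    have h5 : ((θ - θs : EuclideanSpace ℝ (Fin d))) i = θ i - θs i := rfl
    have h6 := hB (θ - θs) i
    rw [h5] at h6
    calc (gradient f θ - (fderiv ℝ (gradient f) θs) (θ - θs)) i
        = gradient f θ i - ((fderiv ℝ (gradient f) θs) (θ - θs)) i := rfl
      _ = gradient f θ i - (-((lam i : ℝ))⁻¹ * (θ i - θs i)) := by rw [h6]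
      _ = gradient f θ i + ((lam i : ℝ))⁻¹ * (θ i - θs i) := by ring
      _ = (gradient f θ +
          (show EuclideanSpace ℝ (Fin d) from WithLp.toLp 2 fun i => ((lam i : ℝ))⁻¹ * (θ i - θs i))) i := rfl
  rw [heq] at hkey
  calc ‖gradient f θ +
        (show EuclideanSpace ℝ (Fin d) from WithLp.toLp 2 fun i => ((lam i : ℝ))⁻¹ * (θ i - θs i))‖
      ≤ M * ‖θ - θs‖ * ‖θ - θs‖ := hkey
    _ = M * ‖θ - θs‖ ^ 2 := by ring

theorem stmt17 (d : ℕ) (p : EuclideanSpace ℝ (Fin d) → ℝ) (hp : ∀ θ, 0 < p θ)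
    (μpost : Measure (EuclideanSpace ℝ (Fin d)))
    (hμpost : μpost = volume.withDensity fun θ => ENNReal.ofReal (p θ))
    [IsProbabilityMeasure μpost]
    (α M : ℝ) (hα : 0 < α) (hM : 0 ≤ M)
    (hsm : ContDiff ℝ 3 fun θ => Real.log (p θ))
    (hconv : StrongConvexOn Set.univ α fun θ => -Real.log (p θ))
    (hbd : ∀ θ, ∑ i, ‖iteratedFDeriv ℝ 2
        (fun t => gradient (fun s => Real.log (p s)) t i) θ‖ ^ 2 ≤ M ^ 2)
    (θs : EuclideanSpace ℝ (Fin d))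
    (hmax : ∀ θ, Real.log (p θ) ≤ Real.log (p θs))
    (lam : Fin d → ℝ≥0) (hlam : ∀ i, lam i ≠ 0)
    -- the Hessian of `log p` at `θs` is `-H*` where `(H*)⁻¹` is diagonal with entries `lam`
    (hH : ∀ v w : EuclideanSpace ℝ (Fin d),
      iteratedFDeriv ℝ 2 (fun s => Real.log (p s)) θs ![v, w] =
        -∑ i, ((lam i : ℝ))⁻¹ * v i * w i)
    (μLaplace : Measure (EuclideanSpace ℝ (Fin d)))
    (hμL : μLaplace =
      ((Measure.pi fun i => gaussianReal 0 (lam i)).map (WithLp.toLp 2) :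
        Measure (EuclideanSpace ℝ (Fin d))).map fun x => θs + x) :
    (∫ θ, ‖gradient (fun s => Real.log (p s)) θ +
        (show EuclideanSpace ℝ (Fin d) from WithLp.toLp 2 fun i => ((lam i : ℝ))⁻¹ * (θ i - θs i))‖
      ∂μLaplace) ≤ M * ∑ i, (lam i : ℝ) := by
  have hpt : ∀ θ : EuclideanSpace ℝ (Fin d),
      ‖gradient (fun s => Real.log (p s)) θ +
        (show EuclideanSpace ℝ (Fin d) from WithLp.toLp 2 fun i => ((lam i : ℝ))⁻¹ * (θ i - θs i))‖
      ≤ M * ‖θ - θs‖ ^ 2 :=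
    fun θ => aux_pointwise hsm hM hbd hmax hH θ
  have hmeas_add : Measurable (fun x : EuclideanSpace ℝ (Fin d) => θs + x) :=
    (continuous_const.add continuous_id).measurable
  have hcont : Continuous (fun θ : EuclideanSpace ℝ (Fin d) => M * ‖θ - θs‖ ^ 2) :=
    continuous_const.mul (((continuous_id.sub continuous_const).norm).pow 2)
  have hcomp : ((fun θ : EuclideanSpace ℝ (Fin d) => M * ‖θ - θs‖ ^ 2) ∘ fun x => θs + x)
      = fun x : EuclideanSpace ℝ (Fin d) => M * ‖x‖ ^ 2 := by
    funext x
    simp [Function.comp, add_sub_cancel_left]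
  have hInt : Integrable (fun θ : EuclideanSpace ℝ (Fin d) => M * ‖θ - θs‖ ^ 2) μLaplace := by
    rw [hμL]
    rw [integrable_map_measure hcont.aestronglyMeasurable hmeas_add.aemeasurable]
    rw [hcomp]
    exact (aux_pi_integrable d lam hlam).const_mul M
  have hmono := integral_mono_of_nonneg
    (f := fun θ : EuclideanSpace ℝ (Fin d) =>
      ‖gradient (fun s => Real.log (p s)) θ +
        (show EuclideanSpace ℝ (Fin d) from WithLp.toLp 2 fun i => ((lam i : ℝ))⁻¹ * (θ i - θs i))‖)
    (g := fun θ : EuclideanSpace ℝ (Fin d) => M * ‖θ - θs‖ ^ 2) (μ := μLaplace)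
    (ae_of_all _ fun θ => norm_nonneg _) hInt (ae_of_all _ hpt)
  have hval : ∫ θ, M * ‖θ - θs‖ ^ 2 ∂μLaplace = M * ∑ i, (lam i : ℝ) := by
    rw [hμL, integral_map hmeas_add.aemeasurable hcont.aestronglyMeasurable]
    have : ∀ x : EuclideanSpace ℝ (Fin d), M * ‖θs + x - θs‖ ^ 2 = M * ‖x‖ ^ 2 := by
      intro x; rw [add_sub_cancel_left]
    rw [integral_congr_ae (Filter.Eventually.of_forall this)]
    rw [integral_const_mul, aux_pi_moment d lam hlam]
  exact hmono.trans (le_of_eq hval)
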